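/- Let (T, v) be a rooted tree of height h and maximum degree Δ. If (T, v) does not contain the complete binary tree of height k+1 as a rooted minor, then |V(T)| ≤ (h+1)^(k+1) · (Δ+1)^(k+1). -/

import Mathlib

open SimpleGraph Set

/-- `H` is a minor of `G`: there is a model of `H` in `G` given by pairwise disjoint
branch sets, each inducing a connected subgraph, with edges of `H` realized by edges of `G`. -/
def HasMinor {V W : Type*} (G : SimpleGraph V) (H : SimpleGraph W) : Prop :=
  ∃ f : W → Set V,
    (∀ w, ((G.induce (f w)).Connected)) ∧
    (Pairwise fun w w' => Disjoint (f w) (f w')) ∧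
    ∀ ⦃w w'⦄, H.Adj w w' → ∃ a ∈ f w, ∃ b ∈ f w', G.Adj a b

/-- A path decomposition of the part of `G` inside the vertex set `A`, with bags `B 0, …, B (p-1)`. -/
def IsPathDecompOn {V : Type*} (G : SimpleGraph V) (A : Set V) (p : ℕ) (B : Fin p → Set V) : Prop :=
  (∀ i, B i ⊆ A) ∧
  (∀ v ∈ A, ∃ i, v ∈ B i) ∧
  (∀ ⦃u v⦄, G.Adj u v → u ∈ A → v ∈ A → ∃ i, u ∈ B i ∧ v ∈ B i) ∧
  (∀ v (i j l : Fin p), i ≤ j → j ≤ l → v ∈ B i → v ∈ B l → v ∈ B j)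

/-- The pathwidth of `G`: the least `t` such that `G` has a path decomposition of width `t`. -/
noncomputable def pathwidth {V : Type*} (G : SimpleGraph V) : ℕ :=
  sInf {t | ∃ p, ∃ B : Fin p → Set V, IsPathDecompOn G Set.univ p B ∧ ∀ i, (B i).ncard ≤ t + 1}

/-- Vertices of the complete binary tree of height `h`: binary strings of length at most `h`. -/
def cbtVert (h : ℕ) : Type := {l : List Bool // l.length ≤ h}

/-- The complete binary tree of height `h`, with a vertex adjacent to its two children
obtained by prepending a bit. -/
def completeBinaryTree (h : ℕ) : SimpleGraph (cbtVert h) :=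
  SimpleGraph.fromRel fun a b => ∃ x : Bool, b.1 = x :: a.1

/-- The root (empty string) of the complete binary tree of height `h`. -/
def cbtRoot (h : ℕ) : cbtVert h := ⟨[], Nat.zero_le h⟩

/-- `(H, rH)` is a rooted minor of `(G, rG)`: a minor model of `H` in `G` whose branch set
for the root `rH` contains the root `rG`. -/
def HasRootedMinor {V W : Type*} (G : SimpleGraph V) (rG : V) (H : SimpleGraph W) (rH : W) :
    Prop :=
  ∃ f : W → Set V, rG ∈ f rH ∧
    (∀ w, ((G.induce (f w)).Connected)) ∧
    (Pairwise fun w w' => Disjoint (f w) (f w')) ∧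
    ∀ ⦃w w'⦄, H.Adj w w' → ∃ a ∈ f w, ∃ b ∈ f w', G.Adj a b

namespace RTSB
open SimpleGraph Walk

variable {V : Type} [DecidableEq V] {T : SimpleGraph V}

noncomputable def pw (hc : T.Connected) (x y : V) : T.Walk x y :=
  ((hc.preconnected x y).some).bypass

lemma pw_isPath (hc : T.Connected) (x y : V) : (pw hc x y).IsPath :=
  Walk.bypass_isPath _

lemma path_eq_pw (hT : T.IsTree) {x y : V} (p : T.Walk x y) (hp : p.IsPath) :
    p = pw hT.isConnected x y := by
  have h := hT.IsAcyclic.path_unique ⟨p, hp⟩ ⟨pw hT.isConnected x y, pw_isPath _ _ _⟩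
  exact congrArg Subtype.val h

lemma length_pw (hT : T.IsTree) (x y : V) :
    (pw hT.isConnected x y).length = T.dist x y := by
  refine le_antisymm ?_ (SimpleGraph.dist_le _)
  obtain ⟨p, hp⟩ := hT.isConnected.exists_walk_length_eq_dist x y
  have h1 : p.bypass = pw hT.isConnected x y := path_eq_pw hT _ p.bypass_isPath
  calc (pw hT.isConnected x y).length = p.bypass.length := by rw [h1]
    _ ≤ p.length := p.length_bypass_le
    _ = T.dist x y := hp

/-- the subtree below `u` in the tree rooted at `v`. -/
def Sub (hc : T.Connected) (v u : V) : Set V := {x | u ∈ (pw hc v x).support}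

lemma mem_Sub {hc : T.Connected} {v u x : V} :
    x ∈ Sub hc v u ↔ u ∈ (pw hc v x).support := Iff.rfl

lemma self_mem_Sub (hc : T.Connected) (v u : V) : u ∈ Sub hc v u :=
  Walk.end_mem_support _

lemma mem_Sub_root (hc : T.Connected) (v x : V) : x ∈ Sub hc v v :=
  Walk.start_mem_support _

variable (hT : T.IsTree)

lemma pw_append {v u x : V} (hx : x ∈ Sub hT.isConnected v u) :
    pw hT.isConnected v x
      = (pw hT.isConnected v u).append (pw hT.isConnected u x) := by
  classical
  set hc := hT.isConnected
  have hsp : (pw hc v x).takeUntil u hx = pw hc v u :=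
    path_eq_pw hT _ ((pw_isPath hc v x).takeUntil hx)
  have hsp' : (pw hc v x).dropUntil u hx = pw hc u x :=
    path_eq_pw hT _ ((pw_isPath hc v x).dropUntil hx)
  conv_lhs => rw [← (pw hc v x).take_spec hx]
  rw [hsp, hsp']

lemma dist_add {v u x : V} (hx : x ∈ Sub hT.isConnected v u) :
    T.dist v x = T.dist v u + T.dist u x := by
  have := congrArg Walk.length (pw_append hT hx)
  rwa [Walk.length_append, length_pw hT, length_pw hT, length_pw hT] at this

lemma Sub_antisymm {v u x : V} (hx : x ∈ Sub hT.isConnected v u)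
    (hu : u ∈ Sub hT.isConnected v x) : u = x := by
  have h1 := dist_add hT hx
  have h2 := dist_add hT hu
  have h3 : T.dist u x = 0 := by omega
  obtain ⟨p, hp⟩ := hT.isConnected.exists_walk_length_eq_dist u x
  exact Walk.eq_of_length_eq_zero (by rw [hp, h3])

lemma mem_support_pw {v u x y : V} (hx : x ∈ Sub hT.isConnected v u)
    (hy : y ∈ (pw hT.isConnected u x).support) :
    y ∈ Sub hT.isConnected v u ∧ x ∈ Sub hT.isConnected v y := by
  classical
  set hc := hT.isConnected
  have hdec := pw_append hT hx
  set q := pw hc u x with hq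
  constructor
  · -- u ∈ support (pw v y)
    have hpath : ((pw hc v u).append (q.takeUntil y hy)).IsPath := by
      apply Walk.IsPath.of_append_left (q := q.dropUntil y hy)
      rw [← Walk.append_assoc, q.take_spec hy, ← hdec]
      exact pw_isPath hc v x
    have hvy : pw hc v y = (pw hc v u).append (q.takeUntil y hy) :=
      (path_eq_pw hT _ hpath).symm
    rw [mem_Sub, hvy, Walk.mem_support_append_iff]
    exact Or.inl (Walk.end_mem_support _)
  · rw [mem_Sub, hdec, Walk.mem_support_append_iff]
    exact Or.inr hy

lemma Sub_trans {v u y : V} (hy : y ∈ Sub hT.isConnected v u) :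
    Sub hT.isConnected v y ⊆ Sub hT.isConnected v u := by
  intro x hx
  rw [mem_Sub, pw_append hT hx, Walk.mem_support_append_iff]
  exact Or.inl hy

lemma Sub_comparable {v u₁ u₂ x : V} (h1 : x ∈ Sub hT.isConnected v u₁)
    (h2 : x ∈ Sub hT.isConnected v u₂) :
    u₁ ∈ Sub hT.isConnected v u₂ ∨ u₂ ∈ Sub hT.isConnected v u₁ := by
  have h2' : u₂ ∈ ((pw hT.isConnected v u₁).append (pw hT.isConnected u₁ x)).support := by
    rw [← pw_append hT h1]; exact h2
  rw [Walk.mem_support_append_iff] at h2'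
  rcases h2' with h | h
  · exact Or.inl h
  · exact Or.inr (mem_support_pw hT h1 h).1


lemma reachable_induce {S : Set V} {a b : V} (p : T.Walk a b)
    (hs : ∀ y ∈ p.support, y ∈ S) :
    (T.induce S).Reachable ⟨a, hs a p.start_mem_support⟩ ⟨b, hs b p.end_mem_support⟩ := by
  induction p with
  | nil => exact Reachable.refl _
  | @cons a c b h q ih =>
      have hcS : c ∈ S := hs c (by simp [Walk.support_cons])
      have h1 : (T.induce S).Adj ⟨a, hs a (Walk.start_mem_support _)⟩ ⟨c, hcS⟩ := h
      exact h1.reachable.trans (ih fun y hy => hs y (by simp [Walk.support_cons, hy]))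

lemma connected_induce_of_hub {S : Set V} {r : V} (hr : r ∈ S)
    (hwalk : ∀ x ∈ S, ∃ p : T.Walk r x, ∀ y ∈ p.support, y ∈ S) :
    (T.induce S).Connected := by
  rw [connected_iff]
  refine ⟨?_, ⟨⟨r, hr⟩⟩⟩
  rintro ⟨a, ha⟩ ⟨b, hb⟩
  obtain ⟨p, hp⟩ := hwalk a ha
  obtain ⟨q, hq⟩ := hwalk b hb
  exact (reachable_induce p hp).symm.trans (reachable_induce q hq)

lemma Sub_connected (v u : V) : (T.induce (Sub hT.isConnected v u)).Connected :=
  connected_induce_of_hub (self_mem_Sub _ v u)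
    (fun x hx => ⟨pw hT.isConnected u x, fun y hy => (mem_support_pw hT hx hy).1⟩)

lemma exists_child {v u x : V} (hx : x ∈ Sub hT.isConnected v u) (hne : x ≠ u) :
    ∃ c, T.Adj u c ∧ c ∈ Sub hT.isConnected v u ∧ x ∈ Sub hT.isConnected v c := by
  set q := pw hT.isConnected u x with hq
  have hlen : q.length ≠ 0 := fun h0 => hne (Walk.eq_of_length_eq_zero h0).symm
  have hadj : T.Adj u (q.getVert 1) := by
    have := q.adj_getVert_succ (i := 0) (by omega)
    rwa [q.getVert_zero] at this
  have hcs : q.getVert 1 ∈ q.support :=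
    Walk.mem_support_iff_exists_getVert.mpr ⟨1, rfl, by omega⟩
  obtain ⟨h1, h2⟩ := mem_support_pw hT hx hcs
  exact ⟨q.getVert 1, hadj, h1, h2⟩

lemma exists_parent {v r u : V} (hu : u ∈ Sub hT.isConnected v r) (hne : u ≠ r) :
    ∃ p, T.Adj p u ∧ p ∈ Sub hT.isConnected v r ∧ u ∈ Sub hT.isConnected v p ∧
      p ∉ Sub hT.isConnected v u := by
  set q := pw hT.isConnected r u with hq
  have hlen : q.length ≠ 0 := fun h0 => hne (Walk.eq_of_length_eq_zero h0).symm
  have hadj : T.Adj (q.getVert (q.length - 1)) u := by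
    have := q.adj_getVert_succ (i := q.length - 1) (by omega)
    rwa [show q.length - 1 + 1 = q.length by omega, q.getVert_length] at this
  have hps : q.getVert (q.length - 1) ∈ q.support :=
    Walk.mem_support_iff_exists_getVert.mpr ⟨q.length - 1, rfl, by omega⟩
  obtain ⟨h1, h2⟩ := mem_support_pw hT hu hps
  exact ⟨_, hadj, h1, h2, fun hp => hadj.ne ((Sub_antisymm hT hp h2).symm)⟩

lemma Sub_disjoint {v u₁ u₂ : V} (h1 : u₁ ∉ Sub hT.isConnected v u₂)
    (h2 : u₂ ∉ Sub hT.isConnected v u₁) :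
    Disjoint (Sub hT.isConnected v u₁) (Sub hT.isConnected v u₂) := by
  rw [Set.disjoint_left]
  intro x hx1 hx2
  rcases Sub_comparable hT hx1 hx2 with h | h
  · exact h1 h
  · exact h2 h


/-- A rooted minor model of the complete binary tree of height `k`, rooted at `r`,
with all branch sets inside `A`. -/
def RM (T : SimpleGraph V) (A : Set V) (r : V) (k : ℕ) : Prop :=
  ∃ f : cbtVert k → Set V, (∀ w, f w ⊆ A) ∧ r ∈ f (cbtRoot k) ∧
    (∀ w, (T.induce (f w)).Connected) ∧
    (Pairwise fun w w' => Disjoint (f w) (f w')) ∧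
    ∀ ⦃w w'⦄, (completeBinaryTree k).Adj w w' → ∃ a ∈ f w, ∃ b ∈ f w', T.Adj a b

lemma cbt_adj {k : ℕ} {w w' : cbtVert k} :
    (completeBinaryTree k).Adj w w' ↔
      w ≠ w' ∧ ((∃ x, w'.1 = x :: w.1) ∨ (∃ x, w.1 = x :: w'.1)) := by
  rw [completeBinaryTree]
  exact SimpleGraph.fromRel_adj _ w w'

noncomputable def glueF (k : ℕ) (D : Set V) (f : Bool → cbtVert k → Set V) :
    cbtVert (k + 1) → Set V := fun w =>
  if hw : w.1 = [] then D
  else f (w.1.getLast hw) ⟨w.1.dropLast, by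
    have h2 := w.2
    rw [List.length_dropLast]
    omega⟩

lemma glueF_nil {k : ℕ} {D : Set V} {f : Bool → cbtVert k → Set V}
    (w : cbtVert (k + 1)) (hw : w.1 = []) : glueF k D f w = D := dif_pos hw

lemma glueF_eq {k : ℕ} {D : Set V} {f : Bool → cbtVert k → Set V}
    (l : List Bool) (b : Bool) (h : (l.concat b).length ≤ k + 1) (hlk : l.length ≤ k) :
    glueF k D f ⟨l.concat b, h⟩ = f b ⟨l, hlk⟩ := by
  have hne : (⟨l.concat b, h⟩ : cbtVert (k + 1)).1 ≠ [] := by simp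
  unfold glueF
  rw [dif_neg hne]
  simp

lemma glue {k : ℕ} {A D : Set V} {r : V} {u p : Bool → V} {S : Bool → Set V}
    (hDA : D ⊆ A) (hSA : ∀ b, S b ⊆ A)
    (hrD : r ∈ D)
    (hDconn : (T.induce D).Connected)
    (hDS : ∀ b, Disjoint D (S b))
    (hSS : Disjoint (S true) (S false))
    (hpD : ∀ b, p b ∈ D)
    (hadj : ∀ b, T.Adj (p b) (u b))
    (hRM : ∀ b, RM T (S b) (u b) k) :
    RM T A r (k + 1) := by
  choose f hsub hroot hconn hdisj hedge using hRM
  have hSS' : ∀ b b' : Bool, b ≠ b' → Disjoint (S b) (S b') := by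
    intro b b' hbb
    cases b <;> cases b' <;> first | exact absurd rfl hbb | exact hSS | exact hSS.symm
  refine ⟨glueF k D f, ?_, ?_, ?_, ?_, ?_⟩
  · -- subsets
    intro w
    rcases List.eq_nil_or_concat w.1 with hw | ⟨t, b, hw⟩
    · rw [glueF_nil w hw]; exact hDA
    · obtain ⟨l, hl⟩ := w
      dsimp only at hw
      subst hw
      rw [glueF_eq t b hl (by simpa using hl)]
      exact (hsub b _).trans (hSA b)
  · -- root
    rw [glueF_nil _ rfl]; exact hrD
  · -- connected
    intro w
    rcases List.eq_nil_or_concat w.1 with hw | ⟨t, b, hw⟩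
    · rw [glueF_nil w hw]; exact hDconn
    · obtain ⟨l, hl⟩ := w
      dsimp only at hw
      subst hw
      rw [glueF_eq t b hl (by simpa using hl)]
      exact hconn b _
  · -- pairwise disjoint
    rintro ⟨l, hl⟩ ⟨l', hl'⟩ hne
    rcases List.eq_nil_or_concat l with rfl | ⟨t, b, rfl⟩ <;>
      rcases List.eq_nil_or_concat l' with rfl | ⟨t', b', rfl⟩
    · exact absurd (Subtype.ext rfl) hne
    · rw [glueF_nil (⟨[], hl⟩ : cbtVert (k + 1)) rfl, glueF_eq t' b' hl' (by simpa using hl')]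
      exact (hDS b').mono_right (hsub b' _)
    · rw [glueF_eq t b hl (by simpa using hl), glueF_nil (⟨[], hl'⟩ : cbtVert (k + 1)) rfl]
      exact ((hDS b).mono_right (hsub b _)).symm
    · rw [glueF_eq t b hl (by simpa using hl), glueF_eq t' b' hl' (by simpa using hl')]
      by_cases hbb : b = b'
      · subst hbb
        refine hdisj b ?_
        intro hEq
        apply hne
        have ht : t = t' := congrArg Subtype.val hEq
        subst ht
        rfl
      · exact Set.disjoint_of_subset (hsub b _) (hsub b' _) (hSS' b b' hbb)
  · -- edges
    have aux : ∀ w w' : cbtVert (k + 1), (∃ x : Bool, w'.1 = x :: w.1) →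
        ∃ a ∈ glueF k D f w, ∃ b ∈ glueF k D f w', T.Adj a b := by
      rintro ⟨l, hl⟩ ⟨l', hl'⟩ ⟨x, hx⟩
      dsimp only at hx
      subst hx
      rcases List.eq_nil_or_concat l with rfl | ⟨t, b, rfl⟩
      · rw [glueF_nil (⟨[], hl⟩ : cbtVert (k + 1)) rfl]
        have h2 : glueF k D f ⟨x :: ([] : List Bool), hl'⟩
            = f x (cbtRoot k) := glueF_eq [] x hl' (by simp)
        rw [h2]
        exact ⟨p x, hpD x, u x, hroot x, hadj x⟩
      · rw [glueF_eq t b hl (by simpa using hl)]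
        have h2 : glueF k D f ⟨x :: t.concat b, hl'⟩
            = f b ⟨x :: t, by simpa using hl'⟩ := glueF_eq (x :: t) b hl' (by simpa using hl')
        rw [h2]
        refine hedge b (w := ⟨t, by simpa using hl⟩) (w' := ⟨x :: t, by simpa using hl'⟩) ?_
        refine cbt_adj.mpr ?_
        refine ⟨?_, Or.inl ⟨x, rfl⟩⟩
        intro hEq
        have hlen := congrArg (fun z : cbtVert k => z.1.length) hEq
        simp at hlen
    intro w w' hadj'
    rw [cbt_adj] at hadj'
    rcases hadj'.2 with hx | hx
    · exact aux w w' hx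
    · obtain ⟨a, ha, b, hb, hab⟩ := aux w' w hx
      exact ⟨b, hb, a, ha, hab.symm⟩


lemma ncard_sbiUnion_le {α β : Type} [Finite β] {s : Set α} (hs : s.Finite)
    (g : α → Set β) (m : ℕ) :
    (∀ u ∈ s, (g u).ncard ≤ m) → (⋃ u ∈ s, g u).ncard ≤ s.ncard * m := by
  induction s, hs using Set.Finite.induction_on with
  | empty => simp
  | @insert a s' ha hs' ih =>
    intro hg
    rw [Set.biUnion_insert, Set.ncard_insert_of_notMem ha hs']
    calc (g a ∪ ⋃ u ∈ s', g u).ncard ≤ (g a).ncard + (⋃ u ∈ s', g u).ncard :=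
          Set.ncard_union_le _ _
      _ ≤ m + s'.ncard * m :=
          add_le_add (hg a (Set.mem_insert _ _)) (ih fun u hu => hg u (Set.mem_insert_of_mem _ hu))
      _ = (s'.ncard + 1) * m := by ring

variable [Fintype V]

lemma key (hT : T.IsTree) (v : V) (h Δ : ℕ)
    (hheight : ∀ u, T.dist v u ≤ h)
    (hdeg : ∀ u, (T.neighborSet u).ncard ≤ Δ) :
    ∀ k (r : V), ((h + 1) * (Δ + 1)) ^ k < (Sub hT.isConnected v r).ncard →
      RM T (Sub hT.isConnected v r) r k := by
  intro k
  induction k with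
  | zero =>
    intro r _
    refine ⟨fun _ => Sub hT.isConnected v r, fun _ => subset_rfl, self_mem_Sub _ _ _,
      fun _ => Sub_connected hT v r, ?_, ?_⟩
    · intro w w' hne
      exfalso
      apply hne
      apply Subtype.ext
      have h1 : w.1 = [] := List.eq_nil_of_length_eq_zero (Nat.le_zero.mp w.2)
      have h2 : w'.1 = [] := List.eq_nil_of_length_eq_zero (Nat.le_zero.mp w'.2)
      rw [h1, h2]
    · intro w w' hadj
      exfalso
      rw [cbt_adj] at hadj
      rcases hadj.2 with ⟨x, hx⟩ | ⟨x, hx⟩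
      · have h0 := w'.2
        rw [hx] at h0
        simp at h0
      · have h0 := w.2
        rw [hx] at h0
        simp at h0
  | succ k ih =>
    intro r hbig
    set hc := hT.isConnected with hhc
    set M := ((h + 1) * (Δ + 1)) ^ k with hMdef
    have hM1 : 1 ≤ M := Nat.one_le_pow _ _ (by positivity)
    have hpowsucc : ((h + 1) * (Δ + 1)) ^ (k + 1) = M * ((h + 1) * (Δ + 1)) := pow_succ _ _
    have hMle : M ≤ ((h + 1) * (Δ + 1)) ^ (k + 1) := by
      rw [hpowsucc]
      exact Nat.le_mul_of_pos_right _ (by positivity)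
    set H := {x | x ∈ Sub hc v r ∧ M < (Sub hc v x).ncard} with hHdef
    have hrH : r ∈ H := ⟨self_mem_Sub _ _ _, lt_of_le_of_lt hMle hbig⟩
    by_cases hpair : ∃ u₁ ∈ H, ∃ u₂ ∈ H, u₁ ∉ Sub hc v u₂ ∧ u₂ ∉ Sub hc v u₁
    · obtain ⟨u₁, hu₁, u₂, hu₂, h12, h21⟩ := hpair
      have hne1 : u₁ ≠ r := fun e => h21 (e ▸ hu₂.1)
      have hne2 : u₂ ≠ r := fun e => h12 (e ▸ hu₁.1)
      obtain ⟨p₁, hp₁adj, hp₁r, hup₁, hp₁n1⟩ := exists_parent hT hu₁.1 hne1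
      obtain ⟨p₂, hp₂adj, hp₂r, hup₂, hp₂n2⟩ := exists_parent hT hu₂.1 hne2
      have hp₁n2 : p₁ ∉ Sub hc v u₂ := fun hp => h12 (Sub_trans hT hp hup₁)
      have hp₂n1 : p₂ ∉ Sub hc v u₁ := fun hp => h21 (Sub_trans hT hp hup₂)
      set D := Sub hc v r \ (Sub hc v u₁ ∪ Sub hc v u₂) with hDdef
      have hrD : r ∈ D := by
        refine ⟨self_mem_Sub _ _ _, ?_⟩
        rintro (hr1 | hr2)
        · exact hne1 (Sub_antisymm hT hu₁.1 hr1).symm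
        · exact hne2 (Sub_antisymm hT hu₂.1 hr2).symm
      have hDconn : (T.induce D).Connected := by
        apply connected_induce_of_hub hrD
        intro x hx
        refine ⟨pw hc r x, ?_⟩
        intro y hy
        obtain ⟨hy1, hy2⟩ := mem_support_pw hT hx.1 hy
        refine ⟨hy1, ?_⟩
        rintro (hyu | hyu)
        · exact hx.2 (Or.inl (Sub_trans hT hyu hy2))
        · exact hx.2 (Or.inr (Sub_trans hT hyu hy2))
      refine glue (D := D) (u := fun b => if b then u₁ else u₂)
        (p := fun b => if b then p₁ else p₂)
        (S := fun b => Sub hc v (if b then u₁ else u₂)) Set.diff_subset ?_ hrD hDconn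
        ?_ ?_ ?_ ?_ ?_
      · intro b
        cases b
        · exact Sub_trans hT hu₂.1
        · exact Sub_trans hT hu₁.1
      · intro b
        rw [Set.disjoint_left]
        intro x hx hxS
        cases b
        · exact hx.2 (Or.inr hxS)
        · exact hx.2 (Or.inl hxS)
      · simp only [if_true, if_false]
        exact Sub_disjoint hT h12 h21
      · intro b
        cases b
        · exact ⟨hp₂r, by rintro (hh | hh); exacts [hp₂n1 hh, hp₂n2 hh]⟩
        · exact ⟨hp₁r, by rintro (hh | hh); exacts [hp₁n1 hh, hp₁n2 hh]⟩
      · intro b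
        cases b
        · exact hp₂adj
        · exact hp₁adj
      · intro b
        cases b
        · exact ih u₂ hu₂.2
        · exact ih u₁ hu₁.2
    · exfalso
      push_neg at hpair
      have hchain : ∀ u₁ ∈ H, ∀ u₂ ∈ H, u₁ ∈ Sub hc v u₂ ∨ u₂ ∈ Sub hc v u₁ := by
        intro u₁ h1 u₂ h2
        by_cases hcc : u₁ ∈ Sub hc v u₂
        · exact Or.inl hcc
        · exact Or.inr (hpair u₁ h1 u₂ h2 hcc)
      have hdist_ne : ∀ a b : V, a ∈ Sub hc v b → a ≠ b → T.dist b a ≠ 0 := by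
        intro a b _ hab h0
        obtain ⟨pq, hpq⟩ := hc.exists_walk_length_eq_dist b a
        exact hab (Walk.eq_of_length_eq_zero (by rw [hpq, h0])).symm
      have hHcard : H.ncard ≤ h + 1 := by
        refine le_trans (Set.ncard_le_ncard_of_injOn (fun u => T.dist v u)
          (t := ↑(Finset.range (h + 1))) ?_ ?_ (Set.toFinite _)) ?_
        · intro a _
          simp only [Finset.coe_range, Set.mem_Iio]
          exact Nat.lt_succ_of_le (hheight a)
        · intro a ha b hb heq
          simp only at heq
          rcases hchain a ha b hb with hcc | hcc
          · have hd := dist_add hT hcc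
            by_contra hne
            exact hdist_ne a b hcc hne (by omega)
          · have hd := dist_add hT hcc
            by_contra hne
            exact hdist_ne b a hcc (Ne.symm hne) (by omega)
        · exact le_of_eq (by rw [Set.ncard_coe_finset, Finset.card_range])
      set L : Set V := {c | (Sub hc v c).ncard ≤ M} with hLdef
      set g : V → Set V := fun u => ⋃ c ∈ T.neighborSet u ∩ L, Sub hc v c with hgdef
      have hcover : Sub hc v r ⊆ H ∪ ⋃ u ∈ H, g u := by
        intro x hx
        by_cases hxH : x ∈ H
        · exact Or.inl hxH
        right
        have hHxne : ({u | u ∈ H ∧ x ∈ Sub hc v u}).Nonempty := ⟨r, hrH, hx⟩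
        obtain ⟨u, huHx, humax⟩ := Set.Finite.exists_maximalFor (fun u => T.dist v u)
          {u | u ∈ H ∧ x ∈ Sub hc v u} (Set.toFinite _) hHxne
        have hxu : x ≠ u := fun e => hxH (e ▸ huHx.1)
        obtain ⟨c, hadj_uc, hcSub, hxc⟩ := exists_child hT huHx.2 hxu
        have hcu : c ≠ u := hadj_uc.ne'
        have hd := dist_add hT hcSub
        have h0 := hdist_ne c u hcSub hcu
        have hcL : c ∈ L := by
          by_contra hcl
          simp only [hLdef, Set.mem_setOf_eq, not_le] at hcl
          have hcH : c ∈ H := ⟨Sub_trans hT huHx.1.1 hcSub, hcl⟩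
          have hle : T.dist v u ≤ T.dist v c := by omega
          have := @humax c ⟨hcH, hxc⟩ hle
          simp only at this
          omega
        refine Set.mem_biUnion huHx.1 ?_
        exact Set.mem_biUnion (⟨hadj_uc, hcL⟩ : c ∈ T.neighborSet u ∩ L) hxc
      have hgcard : ∀ u ∈ H, (g u).ncard ≤ Δ * M := by
        intro u _
        refine le_trans (ncard_sbiUnion_le (Set.toFinite _) _ M ?_) ?_
        · intro c hcmem
          exact hcmem.2
        · have hΔ : (T.neighborSet u ∩ L).ncard ≤ Δ :=
            le_trans (Set.ncard_le_ncard Set.inter_subset_left (Set.toFinite _)) (hdeg u)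
          exact Nat.mul_le_mul_right M hΔ
      have hUcard : (⋃ u ∈ H, g u).ncard ≤ (h + 1) * (Δ * M) :=
        le_trans (ncard_sbiUnion_le (Set.toFinite _) _ (Δ * M) hgcard)
          (Nat.mul_le_mul_right _ hHcard)
      have htot : (Sub hc v r).ncard ≤ (h + 1) + (h + 1) * (Δ * M) :=
        le_trans (le_trans (Set.ncard_le_ncard hcover (Set.toFinite _))
          (Set.ncard_union_le _ _)) (add_le_add hHcard hUcard)
      rw [hpowsucc] at hbig
      nlinarith [hbig, htot, hM1]

end RTSB

/-- If the rooted tree `(T, v)` has height at most `h`, maximum degree at most `Δ`, and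
does not contain the complete binary tree of height `k+1` as a rooted minor, then
`|T| ≤ (h+1)^(k+1) · (Δ+1)^(k+1)`. -/
theorem rooted_tree_size_bound {V : Type} [Fintype V] (T : SimpleGraph V) (hT : T.IsTree)
    (v : V) (h Δ k : ℕ)
    (hheight : ∀ u, T.dist v u ≤ h)
    (hdeg : ∀ u, (T.neighborSet u).ncard ≤ Δ)
    (hnominor : ¬ HasRootedMinor T v (completeBinaryTree (k + 1)) (cbtRoot (k + 1))) :
    Fintype.card V ≤ (h + 1) ^ (k + 1) * (Δ + 1) ^ (k + 1) := by
  classical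
  by_contra hcard
  push_neg at hcard
  have hSub : RTSB.Sub hT.isConnected v v = Set.univ :=
    Set.eq_univ_of_forall fun x => RTSB.mem_Sub_root _ _ _
  have hbig : ((h + 1) * (Δ + 1)) ^ (k + 1) < (RTSB.Sub hT.isConnected v v).ncard := by
    rw [hSub, Set.ncard_univ, Nat.card_eq_fintype_card, mul_pow]
    exact hcard
  obtain ⟨f, hfsub, hfroot, hfconn, hfdisj, hfedge⟩ :=
    RTSB.key hT v h Δ hheight hdeg (k + 1) v hbig
  exact hnominor ⟨f, hfroot, hfconn, hfdisj, hfedge⟩
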